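/- Polymatrix edge-player transformation preserves coalition exploitability: given a polymatrix game on graph G = ([N], E) and a coalition family 𝒮 of nonempty subsets of [N], construct a new game whose players are [N] together with two edge players e_{i,j} and e_{j,i} for each edge (i,j) ∈ E; each edge player has a single action; the utility of edge player e_{i,j} is 𝒰̃_{e_{i,j}}(a) = 𝒰_{i,j}(a_i, a_j), and the utility of each original player i ∈ [N] is identically 0. For S ∈ 𝒮 let S̃ = S ∪ {e_{i,j} : i ∈ S, (i,j) ∈ E} and 𝒮̃ = {S̃ : S ∈ 𝒮}. Then for every joint strategy π ∈ Δ(𝒜): max_{S∈𝒮} max_{â_S∈𝒜_S} (1/|S|) Σ_{i∈S} E_{a∼π}[𝒰_i(â_S, a_{−S}) − 𝒰_i(a)] = max_{S̃∈𝒮̃} max_{â_{S̃∩[N]}∈𝒜_{S̃∩[N]}} (1/|S̃ ∩ [N]|) Σ_{i∈S̃} E_{a∼π}[𝒰̃_i(â_{S̃∩[N]}, a_{−(S̃∩[N])}) − 𝒰̃_i(a)]. -/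
import Mathlib


open Finset

/-- A probability distribution on a finite type. -/
def IsDist {X : Type*} [Fintype X] (p : X → ℝ) : Prop :=
  (∀ x, 0 ≤ p x) ∧ ∑ x, p x = 1

/-- The joint action obtained from `a` by replacing its `S`-coordinates with those of `dev`. -/
def replaceProfile {N : ℕ} {A : Fin N → Type} (S : Finset (Fin N))
    (dev a : (i : Fin N) → A i) : (i : Fin N) → A i :=
  fun i => if i ∈ S then dev i else a i

/-- Utility of player `k` in the polymatrix game on graph `G` with pairwise utilities `W`. -/
noncomputable def polyU {N : ℕ} {A : Fin N → Type} [∀ i, Fintype (A i)]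
    (G : SimpleGraph (Fin N)) [DecidableRel G.Adj]
    (W : ∀ i j : Fin N, A i → A j → ℝ) (k : Fin N) (a : (i : Fin N) → A i) : ℝ :=
  ∑ l ∈ Finset.univ.filter (G.Adj k), W k l (a k) (a l)

/-- Edge players: one player `e_{i,j}` for each ordered pair `(i,j)` with `(i,j) ∈ E`. -/
abbrev EPlayer {N : ℕ} (G : SimpleGraph (Fin N)) : Type :=
  {e : Fin N × Fin N // G.Adj e.1 e.2}

/-- The player set of the transformed game: original players together with edge players. -/
abbrev NewPlayer {N : ℕ} (G : SimpleGraph (Fin N)) : Type := Fin N ⊕ EPlayer G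

/-- Utilities of the transformed game: edge player `e_{i,j}` receives `𝒰_{i,j}(a_i, a_j)`;
original players receive `0`.  (Each edge player has a single action, so joint strategies
are identified with distributions over the original joint action set.) -/
noncomputable def newU {N : ℕ} {A : Fin N → Type}
    (G : SimpleGraph (Fin N)) (W : ∀ i j : Fin N, A i → A j → ℝ) :
    NewPlayer G → ((i : Fin N) → A i) → ℝ
  | Sum.inl _, _ => 0
  | Sum.inr e, a => W e.val.1 e.val.2 (a e.val.1) (a e.val.2)

/-- The coalition `S̃ = S ∪ {e_{i,j} : i ∈ S, (i,j) ∈ E}` of the transformed game. -/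
noncomputable def Stilde {N : ℕ} (G : SimpleGraph (Fin N)) [DecidableRel G.Adj]
    (S : Finset (Fin N)) : Finset (NewPlayer G) :=
  S.image Sum.inl ∪
    (Finset.univ.filter fun e : EPlayer G => e.val.1 ∈ S).image Sum.inr

lemma card_Stilde_inter {N : ℕ} (G : SimpleGraph (Fin N)) [DecidableRel G.Adj]
    (S : Finset (Fin N)) :
    (Stilde G S ∩ (Finset.univ : Finset (Fin N)).image
      (Sum.inl : Fin N → NewPlayer G)).card = S.card := by
  have h : Stilde G S ∩ (Finset.univ : Finset (Fin N)).image
      (Sum.inl : Fin N → NewPlayer G) = S.image Sum.inl := by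
    ext p
    cases p with
    | inl k => simp [Stilde]
    | inr e => simp [Stilde]
  rw [h, Finset.card_image_of_injective _ Sum.inl_injective]

lemma sum_newU_eq {N : ℕ} {A : Fin N → Type} [∀ i, Fintype (A i)]
    (G : SimpleGraph (Fin N)) [DecidableRel G.Adj]
    (W : ∀ i j : Fin N, A i → A j → ℝ) (S : Finset (Fin N))
    (c : (i : Fin N) → A i) :
    ∑ p ∈ Stilde G S, newU G W p c = ∑ i ∈ S, polyU G W i c := by
  have hdisj : Disjoint (S.image (Sum.inl : Fin N → NewPlayer G))
      ((Finset.univ.filter fun e : EPlayer G => e.val.1 ∈ S).image Sum.inr) := by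
    simp [Finset.disjoint_left]
  rw [Stilde, Finset.sum_union hdisj,
    Finset.sum_image (fun a _ b _ h => Sum.inl_injective h),
    Finset.sum_image (fun a _ b _ h => Sum.inr_injective h)]
  have h0 : ∑ i ∈ S, newU G W (Sum.inl i) c = 0 := by simp [newU]
  rw [h0, zero_add]
  simp only [polyU, newU]
  have hs : ∑ x ∈ S, ∑ l ∈ Finset.univ.filter (G.Adj x), W x l (c x) (c l)
      = ∑ x ∈ S.sigma (fun i => Finset.univ.filter (G.Adj i)),
          W x.1 x.2 (c x.1) (c x.2) :=
    (Finset.sum_sigma S (fun i => Finset.univ.filter (G.Adj i))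
      (fun x : Σ _ : Fin N, Fin N => W x.1 x.2 (c x.1) (c x.2))).symm
  rw [hs]
  refine Finset.sum_bij (fun e _ => (⟨e.val.1, e.val.2⟩ : Σ _ : Fin N, Fin N))
    ?_ ?_ ?_ ?_
  · intro e he
    simp only [Finset.mem_filter, Finset.mem_univ, true_and] at he
    simp [Finset.mem_sigma, he, e.property]
  · intro e₁ h₁ e₂ h₂ h
    exact Subtype.ext (by
      simpa [Prod.ext_iff] using
        congrArg (fun x : Σ _ : Fin N, Fin N => (x.1, x.2)) h)
  · intro x hx
    simp only [Finset.mem_sigma, Finset.mem_filter, Finset.mem_univ, true_and] at hx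
    exact ⟨⟨(x.1, x.2), hx.2⟩, by simp [hx.1], rfl⟩
  · intro e he
    rfl

lemma inner_eq {N : ℕ} {A : Fin N → Type} [∀ i, Fintype (A i)]
    (G : SimpleGraph (Fin N)) [DecidableRel G.Adj]
    (W : ∀ i j : Fin N, A i → A j → ℝ) (S : Finset (Fin N))
    (dev : (i : Fin N) → A i) (π : ((i : Fin N) → A i) → ℝ) :
    ∑ p ∈ Stilde G S, ∑ a, π a *
        (newU G W p (fun k => if Sum.inl k ∈ Stilde G S then dev k else a k) -
          newU G W p a) =
      ∑ i ∈ S, ∑ a, π a *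
        (polyU G W i (replaceProfile S dev a) - polyU G W i a) := by
  rw [Finset.sum_comm, Finset.sum_comm (s := S)]
  refine Finset.sum_congr rfl fun a _ => ?_
  have hb : (fun k => if Sum.inl k ∈ Stilde G S then dev k else a k)
      = replaceProfile S dev a := by
    funext k
    simp [replaceProfile, Stilde]
  rw [hb, ← Finset.mul_sum, ← Finset.mul_sum]
  congr 1
  rw [Finset.sum_sub_distrib, Finset.sum_sub_distrib,
    sum_newU_eq G W S (replaceProfile S dev a), sum_newU_eq G W S a]

/-- The polymatrix edge-player transformation preserves the coalition exploitability. -/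
theorem stmt13 {N : ℕ} {A : Fin N → Type} [∀ i, Fintype (A i)] [∀ i, DecidableEq (A i)]
    [∀ i, Nonempty (A i)]
    (G : SimpleGraph (Fin N)) [DecidableRel G.Adj]
    (W : ∀ i j : Fin N, A i → A j → ℝ)
    (hW : ∀ i j, G.Adj i j → ∀ x y, W i j x y ∈ Set.Icc (0 : ℝ) 1)
    (𝒮 : Finset (Finset (Fin N))) (h𝒮 : ∀ S ∈ 𝒮, S.Nonempty)
    (π : ((i : Fin N) → A i) → ℝ) (hπ : IsDist π) :
    sSup {x | ∃ S ∈ 𝒮, ∃ dev : (i : Fin N) → A i,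
        x = (S.card : ℝ)⁻¹ * ∑ i ∈ S, ∑ a, π a *
          (polyU G W i (replaceProfile S dev a) - polyU G W i a)} =
      sSup {x | ∃ S ∈ 𝒮, ∃ dev : (i : Fin N) → A i,
        x = (((Stilde G S ∩
              (Finset.univ : Finset (Fin N)).image (Sum.inl : Fin N → NewPlayer G)).card : ℝ))⁻¹ *
          ∑ p ∈ Stilde G S, ∑ a, π a *
            (newU G W p (fun k => if Sum.inl k ∈ Stilde G S then dev k else a k) -
              newU G W p a)} := by
  congr 1
  ext x
  constructor
  · rintro ⟨S, hS, dev, rfl⟩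
    exact ⟨S, hS, dev, by rw [card_Stilde_inter, inner_eq]⟩
  · rintro ⟨S, hS, dev, rfl⟩
    exact ⟨S, hS, dev, by rw [card_Stilde_inter, inner_eq]⟩
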